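/- Let r_c = exp(-π/√3). For every real r with 0 < r < r_c there exists a unique β in the open interval (0, 1/6) satisfying the transcendental equation -3β·log(r) + log(2·sin(π(1/6 - β))) = 0. -/

import Mathlib

open Real Set Filter Topology
noncomputable def Fβ (r β : ℝ) : ℝ :=
  -3 * β * Real.log r + Real.log (2 * Real.sin (Real.pi * (1/6 - β)))

lemma sin_pos_aux {β : ℝ} (hβ : β ∈ Set.Ico (0:ℝ) (1/6)) :
    0 < Real.sin (Real.pi * (1/6 - β)) := by
  apply Real.sin_pos_of_pos_of_lt_pi
  · have := hβ.2; nlinarith [Real.pi_pos]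
  · have := hβ.1; nlinarith [Real.pi_pos]

lemma Fβ_zero (r : ℝ) : Fβ r 0 = 0 := by
  unfold Fβ
  rw [show Real.pi * (1/6 - (0:ℝ)) = Real.pi/6 by ring, Real.sin_pi_div_six]
  norm_num

lemma Fβ_strictConcave (r : ℝ) :
    StrictConcaveOn ℝ (Set.Ico (0:ℝ) (1/6)) (Fβ r) := by
  constructor
  · exact convex_Ico _ _
  · intro x hx y hy hxy p q hp hq hpq
    simp only [smul_eq_mul, Fβ]
    have hXm : Real.pi * (1/6 - x) ∈ Set.Icc 0 Real.pi := by
      constructor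
      · have := hx.2; nlinarith [Real.pi_pos]
      · have := hx.1; nlinarith [Real.pi_pos]
    have hYm : Real.pi * (1/6 - y) ∈ Set.Icc 0 Real.pi := by
      constructor
      · have := hy.2; nlinarith [Real.pi_pos]
      · have := hy.1; nlinarith [Real.pi_pos]
    have hXY : Real.pi * (1/6 - x) ≠ Real.pi * (1/6 - y) := by
      intro h
      have hpi := Real.pi_ne_zero
      field_simp at h
      exact hxy (by linarith)
    have hsin := strictConcaveOn_sin_Icc.2 hXm hYm hXY hp hq hpq
    simp only [smul_eq_mul] at hsin
    have harg : Real.pi * (1/6 - (p*x + q*y))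
        = p * (Real.pi * (1/6 - x)) + q * (Real.pi * (1/6 - y)) := by
      linear_combination (-Real.pi/6) * hpq
    have hsx : 0 < Real.sin (Real.pi * (1/6 - x)) := sin_pos_aux hx
    have hsy : 0 < Real.sin (Real.pi * (1/6 - y)) := sin_pos_aux hy
    have hS : 0 < p * (2 * Real.sin (Real.pi * (1/6 - x)))
        + q * (2 * Real.sin (Real.pi * (1/6 - y))) := by positivity
    have h2 : p * (2 * Real.sin (Real.pi * (1/6 - x)))
        + q * (2 * Real.sin (Real.pi * (1/6 - y)))
        < 2 * Real.sin (Real.pi * (1/6 - (p*x + q*y))) := by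
      rw [harg]; linarith
    have hlog1 := Real.log_lt_log hS h2
    have hlog2 := strictConcaveOn_log_Ioi.concaveOn.2
      (Set.mem_Ioi.2 (by positivity : (0:ℝ) < 2 * Real.sin (Real.pi * (1/6 - x))))
      (Set.mem_Ioi.2 (by positivity : (0:ℝ) < 2 * Real.sin (Real.pi * (1/6 - y))))
      hp.le hq.le hpq
    simp only [smul_eq_mul] at hlog2
    nlinarith [hlog1, hlog2]

lemma Fβ_unique_aux (r x y : ℝ) (hx : x ∈ Set.Ioo (0:ℝ) (1/6))
    (hy : y ∈ Set.Ioo (0:ℝ) (1/6)) (hxy : x < y)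
    (hfx : Fβ r x = 0) (hfy : Fβ r y = 0) : False := by
  have hyne : y ≠ 0 := ne_of_gt hy.1
  have hp : 0 < (y - x)/y := div_pos (by linarith [hx.1, hy.1]) hy.1
  have hq : 0 < x/y := div_pos hx.1 hy.1
  have hpq : (y - x)/y + x/y = 1 := by field_simp; ring
  have h0 : (0:ℝ) ∈ Set.Ico (0:ℝ) (1/6) := ⟨le_refl _, by norm_num⟩
  have hyI : y ∈ Set.Ico (0:ℝ) (1/6) := ⟨hy.1.le, hy.2⟩
  have key := (Fβ_strictConcave r).2 h0 hyI (ne_of_lt hy.1) hp hq hpq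
  simp only [smul_eq_mul] at key
  have harg : (y - x)/y * 0 + x/y * y = x := by field_simp; ring
  rw [harg, hfx, Fβ_zero, hfy] at key
  simp at key

lemma Fβ_hasDerivAt (r : ℝ) :
    HasDerivAt (Fβ r) (-3 * Real.log r - Real.sqrt 3 * Real.pi) 0 := by
  have h1 : HasDerivAt (fun β : ℝ => 1/6 - β) (-1) 0 :=
    (hasDerivAt_id 0).const_sub (1/6)
  have h2 : HasDerivAt (fun β : ℝ => Real.pi * (1/6 - β)) (Real.pi * -1) 0 :=
    h1.const_mul Real.pi
  have h3 : HasDerivAt (fun β : ℝ => Real.sin (Real.pi * (1/6 - β)))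
      (Real.cos (Real.pi * (1/6 - 0)) * (Real.pi * -1)) 0 :=
    h2.sin
  have h4 := h3.const_mul 2
  have hval : (2 : ℝ) * Real.sin (Real.pi * (1/6 - 0)) = 1 := by
    rw [show Real.pi * (1/6 - (0:ℝ)) = Real.pi/6 by ring, Real.sin_pi_div_six]; norm_num
  have hne : (2 : ℝ) * Real.sin (Real.pi * (1/6 - 0)) ≠ 0 := by rw [hval]; norm_num
  have h5 : HasDerivAt (fun β : ℝ => Real.log (2 * Real.sin (Real.pi * (1/6 - β))))
      ((2 * Real.sin (Real.pi * (1/6 - 0)))⁻¹ * (2 * (Real.cos (Real.pi * (1/6 - 0)) * (Real.pi * -1)))) 0 :=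
    (h4.log hne).congr_deriv (div_eq_inv_mul _ _)
  have h6 : HasDerivAt (fun β : ℝ => -3 * β * Real.log r) (-3 * Real.log r) 0 := by
    have := ((hasDerivAt_id (0:ℝ)).const_mul (-3)).mul_const (Real.log r)
    simpa using this
  have := h6.add h5
  refine HasDerivAt.congr_deriv this ?_
  rw [hval, show Real.pi * (1/6 - (0:ℝ)) = Real.pi/6 by ring, Real.cos_pi_div_six]
  ring

theorem exists_unique_beta_subcritical
    (r : ℝ) (hr0 : 0 < r) (hrc : r < Real.exp (-Real.pi / Real.sqrt 3)) :
    ∃! β : ℝ, β ∈ Set.Ioo (0 : ℝ) (1/6) ∧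
      -3 * β * Real.log r + Real.log (2 * Real.sin (Real.pi * (1/6 - β))) = 0 := by
  have hs3 : (0:ℝ) < Real.sqrt 3 := Real.sqrt_pos.2 (by norm_num)
  have h33 : Real.sqrt 3 * Real.sqrt 3 = 3 := Real.mul_self_sqrt (by norm_num)
  have hlog : Real.log r < -Real.pi / Real.sqrt 3 :=
    (Real.log_lt_iff_lt_exp hr0).2 hrc
  have hd : 0 < -3 * Real.log r - Real.sqrt 3 * Real.pi := by
    have h1 : Real.log r * Real.sqrt 3 < -Real.pi := by
      have := mul_lt_mul_of_pos_right hlog hs3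
      rwa [div_mul_cancel₀ _ (ne_of_gt hs3)] at this
    nlinarith [mul_lt_mul_of_pos_right h1 hs3, Real.pi_pos]
  have ha : 0 < -3 * Real.log r := by nlinarith [Real.pi_pos]
  -- the negative point β₂ = 1/6 - ε
  set a : ℝ := -3 * Real.log r with ha_def
  set ε : ℝ := min (1/12) (Real.exp (-a/6) / (4 * Real.pi)) with hε_def
  have hεpos : 0 < ε :=
    lt_min (by norm_num) (div_pos (Real.exp_pos _) (by positivity))
  have hε12 : ε ≤ 1/12 := min_le_left _ _
  set β₂ : ℝ := 1/6 - ε with hβ₂_def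
  have hβ₂mem : β₂ ∈ Set.Ioo (0:ℝ) (1/6) := by
    constructor <;> simp only [hβ₂_def] <;> [linarith; linarith]
  have hargβ₂ : Real.pi * (1/6 - β₂) = Real.pi * ε := by rw [hβ₂_def]; ring
  have hsinε_pos : 0 < Real.sin (Real.pi * ε) := by
    apply Real.sin_pos_of_pos_of_lt_pi
    · positivity
    · nlinarith [Real.pi_pos]
  have hFβ₂ : Fβ r β₂ < 0 := by
    have hsin_le : Real.sin (Real.pi * ε) ≤ Real.pi * ε := Real.sin_le (by positivity)
    have h2πε : 2 * (Real.pi * ε) ≤ Real.exp (-a/6) / 2 := by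
      have : ε ≤ Real.exp (-a/6) / (4 * Real.pi) := min_le_right _ _
      have := mul_le_mul_of_nonneg_left this (le_of_lt (by positivity : (0:ℝ) < 2 * Real.pi))
      calc 2 * (Real.pi * ε) = 2 * Real.pi * ε := by ring
        _ ≤ 2 * Real.pi * (Real.exp (-a/6) / (4 * Real.pi)) := this
        _ = Real.exp (-a/6) / 2 := by field_simp; ring
    have hlog_le : Real.log (2 * Real.sin (Real.pi * (1/6 - β₂)))
        ≤ Real.log (Real.exp (-a/6) / 2) := by
      rw [hargβ₂]
      apply Real.log_le_log (by positivity)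
      linarith
    have hlogval : Real.log (Real.exp (-a/6) / 2) = -a/6 - Real.log 2 := by
      rw [Real.log_div (Real.exp_ne_zero _) (by norm_num), Real.log_exp]
    have hlin : -3 * β₂ * Real.log r ≤ a/6 := by
      have : -3 * β₂ * Real.log r = a * β₂ := by rw [ha_def]; ring
      rw [this]
      have : β₂ ≤ 1/6 := by rw [hβ₂_def]; linarith
      nlinarith [ha]
    have hlog2pos : 0 < Real.log 2 := Real.log_pos (by norm_num)
    unfold Fβ
    linarith [hlog_le, hlogval ▸ hlog_le]
  -- the positive point
  have hslope : Tendsto (slope (Fβ r) 0) (𝓝[>] 0) (𝓝 (a - Real.sqrt 3 * Real.pi)) := by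
    have := hasDerivAt_iff_tendsto_slope.1 (Fβ_hasDerivAt r)
    exact this.mono_left (nhdsWithin_mono _ (fun z hz => ne_of_gt hz))
  have hev1 : ∀ᶠ z in 𝓝[>] (0:ℝ), 0 < slope (Fβ r) 0 z :=
    hslope.eventually (eventually_gt_nhds hd)
  have hev2 : Set.Ioo (0:ℝ) β₂ ∈ 𝓝[>] (0:ℝ) :=
    Ioo_mem_nhdsGT_of_mem ⟨le_refl _, hβ₂mem.1⟩
  obtain ⟨z, hz1, hz2⟩ := (hev1.and (eventually_of_mem hev2 (fun _ h => h))).exists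
  have hzpos : 0 < z := hz2.1
  have hFz : 0 < Fβ r z := by
    rw [slope_def_field, Fβ_zero, sub_zero, sub_zero] at hz1
    rcases (div_pos_iff).1 hz1 with ⟨h, _⟩ | ⟨_, h⟩
    · exact h
    · linarith
  -- IVT
  have hzβ₂ : z ≤ β₂ := hz2.2.le
  have hcont : ContinuousOn (Fβ r) (Set.Icc z β₂) := by
    unfold Fβ
    apply ContinuousOn.add
    · fun_prop
    · apply ContinuousOn.log
      · fun_prop
      · intro x hx
        have hxm : x ∈ Set.Ico (0:ℝ) (1/6) :=
          ⟨le_trans hzpos.le hx.1, lt_of_le_of_lt hx.2 hβ₂mem.2⟩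
        have := sin_pos_aux hxm
        positivity
  obtain ⟨c, hcmem, hfc⟩ := intermediate_value_Ioo' hzβ₂ hcont ⟨hFβ₂, hFz⟩
  have hcI : c ∈ Set.Ioo (0:ℝ) (1/6) :=
    ⟨lt_trans hzpos hcmem.1, lt_trans hcmem.2 hβ₂mem.2⟩
  refine ⟨c, ⟨hcI, hfc⟩, ?_⟩
  intro y ⟨hyI, hyE⟩
  rcases lt_trichotomy y c with h | h | h
  · exact absurd (Fβ_unique_aux r y c hyI hcI h hyE hfc) (fun f => f)
  · exact h
  · exact absurd (Fβ_unique_aux r c y hcI hyI h hfc hyE) (fun f => f)
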